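/- Let A be an associative unital topological ring admitting a compact subset Q with 1 ∈ Q and Q = −Q that generates A as a ring, let X be a Banach space, and let n ≥ 2. Let G' ≅ E(n,A) ⋉ Aⁿ and H' ≅ Aⁿ be realized inside E(n+1,A), and let G ≅ E(n+1,A) ⋉ A^{n+1} and H ≅ A^{n+1} be realized inside E(n+2,A), as described in the context. Set S' = {e_{i,j}(q) : q ∈ Q, i ≠ j} ∩ G' (elementary matrices of size n+1). Assume that the pair G' > H' has weak relative property (T_X) with respect to S', i.e.: for every isometric representation ρ of G' on X there exists ε > 0 such that sup_{s ∈ S'} ‖ρ(s)ξ − ξ‖ ≥ ε · sup_{h ∈ H'} ‖ρ(h)ξ − ξ‖ for every ξ ∈ X. Then the pair G > H has relative property (FF_X): for every isometric representation ρ of G on X and every quasi-1-cocycle c : G → X into ρ, one has sup_{h ∈ H} ‖c(h)‖ < ∞. -/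

import Mathlib

open Matrix

noncomputable section

abbrev MatA (n : ℕ) (A : Type*) [Ring A] := Matrix (Fin n) (Fin n) A

/-- The elementary matrix `e_{i,j}(a)`: identity with `a` in position `(i,j)`. -/
def elemMat (n : ℕ) (A : Type*) [Ring A] (i j : Fin n) (a : A) : MatA n A :=
  1 + Matrix.single i j a

/-- The elementary group `E(n,A)`: the subgroup of the invertible `n×n` matrices over `A`
generated by the elementary matrices `e_{i,j}(a)`, `i ≠ j`. -/
def elemGrp (n : ℕ) (A : Type*) [Ring A] : Subgroup (MatA n A)ˣ :=
  Subgroup.closure {u | ∃ i j : Fin n, ∃ a : A, i ≠ j ∧ u.val = elemMat n A i j a}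

/-- The copy of `E(n,A) ⋉ Aⁿ` inside `E(n+1,A)`: the subgroup generated by the elementary
matrices `e_{i,j}(a)` with `i ≠ j` and `i ≤ n` (i.e. `i` not the last index). -/
def upperGrp (n : ℕ) (A : Type*) [Ring A] : Subgroup (MatA (n + 1) A)ˣ :=
  Subgroup.closure
    {u | ∃ i j : Fin (n + 1), ∃ a : A, i ≠ j ∧ (i : ℕ) < n ∧
      u.val = elemMat (n + 1) A i j a}

/-- The matrix with identity upper-left `n×n` block, last column `v` above the diagonal
entry `1`, and zero elsewhere. -/
def colMat (n : ℕ) (A : Type*) [Ring A] (v : Fin n → A) : MatA (n + 1) A :=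
  Matrix.of fun i j =>
    (if i = j then 1 else 0) + (if h : (i : ℕ) < n ∧ (j : ℕ) = n then v ⟨i, h.1⟩ else 0)

/-- The copy of `Aⁿ` inside `E(n+1,A)`: matrices with identity upper-left block and
arbitrary last column. -/
def colSet (n : ℕ) (A : Type*) [Ring A] : Set (MatA (n + 1) A)ˣ :=
  {u | ∃ v : Fin n → A, u.val = colMat n A v}


namespace Stmt17Aux

variable {A : Type*} [Ring A] {m : ℕ}

lemma one_add_mul_one_add {R : Type*} [Ring R] (P Q : R) :
    (1 + P) * (1 + Q) = 1 + P + Q + P * Q := by noncomm_ring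

lemma stdB_mul_ne {i j p r : Fin m} (h : j ≠ p) (a b : A) :
    Matrix.single i j a * Matrix.single p r b = 0 :=
  Matrix.single_mul_single_of_ne (c := a) i j p h b

lemma elemMat_mul_same (i j : Fin m) (hij : i ≠ j) (a b : A) :
    elemMat m A i j a * elemMat m A i j b = elemMat m A i j (a + b) := by
  simp only [elemMat, one_add_mul_one_add, stdB_mul_ne (Ne.symm hij),
    Matrix.single_add, add_zero]
  abel

lemma elemMat_comm (i j p r : Fin m) (hjp : j ≠ p) (hri : r ≠ i) (a b : A) :
    elemMat m A i j a * elemMat m A p r b = elemMat m A p r b * elemMat m A i j a := by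
  simp only [elemMat, one_add_mul_one_add, stdB_mul_ne hjp, stdB_mul_ne hri, add_zero]
  abel

/-- Steinberg: `e_{ij}(a) e_{jk}(b) = e_{jk}(b) e_{ij}(a) e_{ik}(ab)`. -/
lemma elemMat_steinberg (i j p : Fin m) (hij : i ≠ j) (hjp : j ≠ p) (hip : i ≠ p)
    (a b : A) :
    elemMat m A i j a * elemMat m A j p b
      = elemMat m A j p b * elemMat m A i j a * elemMat m A i p (a * b) := by
  simp only [elemMat, mul_add, add_mul, mul_one, one_mul,
    Matrix.single_mul_single_same, stdB_mul_ne (Ne.symm hij), stdB_mul_ne (Ne.symm hjp),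
    stdB_mul_ne (Ne.symm hip), zero_mul, mul_zero, add_zero, zero_add]
  abel

/-- The elementary matrix as a unit. -/
def elemUnit (A : Type*) [Ring A] {m : ℕ} (i j : Fin m) (hij : i ≠ j) (a : A) :
    (MatA m A)ˣ where
  val := elemMat m A i j a
  inv := elemMat m A i j (-a)
  val_inv := by rw [elemMat_mul_same i j hij, add_neg_cancel]; simp [elemMat]
  inv_val := by rw [elemMat_mul_same i j hij, neg_add_cancel]; simp [elemMat]

@[simp] lemma elemUnit_val (i j : Fin m) (hij : i ≠ j) (a : A) :
    (elemUnit A i j hij a).val = elemMat m A i j a := rfl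

lemma elemUnit_mul_same (i j : Fin m) (hij : i ≠ j) (a b : A) :
    elemUnit A i j hij a * elemUnit A i j hij b = elemUnit A i j hij (a + b) :=
  Units.ext (elemMat_mul_same i j hij a b)

lemma elemUnit_inv (i j : Fin m) (hij : i ≠ j) (a : A) :
    (elemUnit A i j hij a)⁻¹ = elemUnit A i j hij (-a) := Units.ext rfl

lemma elemUnit_zero (i j : Fin m) (hij : i ≠ j) :
    elemUnit A i j hij (0 : A) = 1 := by
  apply Units.ext; simp [elemMat]

lemma elemUnit_comm (i j p r : Fin m) (hij : i ≠ j) (hpr : p ≠ r)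
    (hjp : j ≠ p) (hri : r ≠ i) (a b : A) :
    elemUnit A i j hij a * elemUnit A p r hpr b
      = elemUnit A p r hpr b * elemUnit A i j hij a :=
  Units.ext (elemMat_comm i j p r hjp hri a b)

lemma elemUnit_steinberg (i j p : Fin m) (hij : i ≠ j) (hjp : j ≠ p) (hip : i ≠ p)
    (a b : A) :
    elemUnit A i j hij a * elemUnit A j p hjp b
      = elemUnit A j p hjp b * elemUnit A i j hij a * elemUnit A i p hip (a * b) :=
  Units.ext (elemMat_steinberg i j p hij hjp hip a b)

lemma elemUnit_pow (i j : Fin m) (hij : i ≠ j) (a : A) (t : ℕ) :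
    elemUnit A i j hij a ^ t = elemUnit A i j hij (t • a) := by
  induction t with
  | zero => simp [elemUnit_zero]
  | succ s ih => rw [pow_succ, ih, elemUnit_mul_same, succ_nsmul]

section QC

variable {X : Type*} [NormedAddCommGroup X] [NormedSpace ℝ X]
variable {G : Type*} [Group G] (ρ : G →* (X ≃ₗᵢ[ℝ] X))

lemma rho_mul_apply (g h : G) (x : X) : ρ (g * h) x = ρ g (ρ h x) := by
  rw [_root_.map_mul, LinearIsometryEquiv.coe_mul, Function.comp_apply]

lemma disp_mul (g h : G) (ξ : X) :
    ‖ρ (g * h) ξ - ξ‖ ≤ ‖ρ g ξ - ξ‖ + ‖ρ h ξ - ξ‖ := by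
  have h1 : ρ (g * h) ξ - ξ = ρ g (ρ h ξ - ξ) + (ρ g ξ - ξ) := by
    rw [rho_mul_apply, (ρ g).map_sub]; abel
  rw [h1]
  have h2 := norm_add_le (ρ g (ρ h ξ - ξ)) (ρ g ξ - ξ)
  have h3 : ‖ρ g (ρ h ξ - ξ)‖ = ‖ρ h ξ - ξ‖ := (ρ g).norm_map _
  linarith

variable (c : G → X) (Δ : ℝ) (hd : ∀ g h : G, ‖c (g * h) - c g - ρ g (c h)‖ ≤ Δ)

include hd

lemma qc_one : ‖c 1‖ ≤ Δ := by
  have h1 := hd 1 1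
  simpa using h1

lemma qc_nonneg : 0 ≤ Δ := le_trans (norm_nonneg _) (qc_one ρ c Δ hd)

lemma qc_mul_norm (g h : G) : ‖c (g * h)‖ ≤ ‖c g‖ + ‖c h‖ + Δ := by
  have h1 : c (g * h) = (c (g * h) - c g - ρ g (c h)) + c g + ρ g (c h) := by abel
  rw [h1]
  have h2 := norm_add_le ((c (g * h) - c g - ρ g (c h)) + c g) (ρ g (c h))
  have h3 := norm_add_le (c (g * h) - c g - ρ g (c h)) (c g)
  have h4 : ‖ρ g (c h)‖ = ‖c h‖ := (ρ g).norm_map _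
  have h5 := hd g h
  linarith

lemma qc_inv_norm (g : G) : ‖c g⁻¹‖ ≤ ‖c g‖ + 2 * Δ := by
  have h1 := hd g⁻¹ g
  rw [inv_mul_cancel] at h1
  have h2 : c g⁻¹ = c 1 - (c 1 - c g⁻¹ - ρ g⁻¹ (c g)) - ρ g⁻¹ (c g) := by abel
  rw [h2]
  have h3 := qc_one ρ c Δ hd
  have h4 : ‖ρ g⁻¹ (c g)‖ = ‖c g‖ := (ρ g⁻¹).norm_map _
  have h5 := norm_sub_le (c 1 - (c 1 - c g⁻¹ - ρ g⁻¹ (c g))) (ρ g⁻¹ (c g))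
  have h6 := norm_sub_le (c 1) (c 1 - c g⁻¹ - ρ g⁻¹ (c g))
  linarith

lemma qc_four (g₁ g₂ g₃ g₄ : G) :
    ‖c (g₁ * g₂ * g₃ * g₄)‖ ≤ ‖c g₁‖ + ‖c g₂‖ + ‖c g₃‖ + ‖c g₄‖ + 3 * Δ := by
  have h1 := qc_mul_norm ρ c Δ hd (g₁ * g₂ * g₃) g₄
  have h2 := qc_mul_norm ρ c Δ hd (g₁ * g₂) g₃
  have h3 := qc_mul_norm ρ c Δ hd g₁ g₂
  linarith

lemma qc_comm_disp {g h : G} (hcomm : g * h = h * g) :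
    ‖ρ g (c h) - c h‖ ≤ 2 * ‖c g‖ + 2 * Δ := by
  have h1 := hd g h
  have h2 := hd h g
  rw [hcomm] at h1
  have h3 : ρ g (c h) - c h =
      ((c (h * g) - c h - ρ h (c g)) - (c (h * g) - c g - ρ g (c h))) + ρ h (c g) - c g := by
    abel
  rw [h3]
  have h4 : ‖ρ h (c g)‖ = ‖c g‖ := (ρ h).norm_map _
  have h5 := norm_sub_le (((c (h * g) - c h - ρ h (c g)) - (c (h * g) - c g - ρ g (c h))) + ρ h (c g)) (c g)
  have h6 := norm_add_le ((c (h * g) - c h - ρ h (c g)) - (c (h * g) - c g - ρ g (c h))) (ρ h (c g))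
  have h7 := norm_sub_le (c (h * g) - c h - ρ h (c g)) (c (h * g) - c g - ρ g (c h))
  linarith

lemma qc_pow_norm (g : G) (t : ℕ) : ‖c (g ^ t)‖ ≤ t * (‖c g‖ + Δ) + Δ := by
  induction t with
  | zero => simpa using qc_one ρ c Δ hd
  | succ s ih =>
      rw [pow_succ]
      have h1 := qc_mul_norm ρ c Δ hd (g ^ s) g
      have h2 : (0:ℝ) ≤ ‖c g‖ := norm_nonneg _
      push_cast
      nlinarith [qc_nonneg ρ c Δ hd]

lemma qc_pow_lower (g : G) (β : ℝ) (hβ : ∀ t : ℕ, ‖ρ (g ^ t) (c g) - c g‖ ≤ β) (t : ℕ) :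
    (t : ℝ) * ‖c g‖ ≤ ‖c (g ^ t)‖ + t * (Δ + β) + Δ := by
  have key : ∀ s : ℕ, ‖c (g ^ s) - (s : ℝ) • c g‖ ≤ s * (Δ + β) + Δ := by
    intro s
    induction s with
    | zero => simpa using qc_one ρ c Δ hd
    | succ r ih =>
        have h1 := hd (g ^ r) g
        have h2 := hβ r
        have h3 : c (g ^ (r + 1)) - ((r : ℝ) + 1) • c g =
            (c (g ^ r * g) - c (g ^ r) - ρ (g ^ r) (c g)) + (ρ (g ^ r) (c g) - c g)
              + (c (g ^ r) - (r : ℝ) • c g) := by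
          rw [pow_succ, add_smul, one_smul]; abel
        have h4 := norm_add_le ((c (g ^ r * g) - c (g ^ r) - ρ (g ^ r) (c g)) + (ρ (g ^ r) (c g) - c g)) (c (g ^ r) - (r : ℝ) • c g)
        have h5 := norm_add_le (c (g ^ r * g) - c (g ^ r) - ρ (g ^ r) (c g)) (ρ (g ^ r) (c g) - c g)
        push_cast at h3 ⊢
        rw [h3]
        push_cast at ih
        linarith
  have h5 := key t
  have h6 : ‖(t : ℝ) • c g‖ = (t : ℝ) * ‖c g‖ := by
    rw [norm_smul, Real.norm_natCast]
  calc (t : ℝ) * ‖c g‖ = ‖(t : ℝ) • c g‖ := h6.symm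
    _ ≤ ‖c (g ^ t)‖ + ‖c (g ^ t) - (t : ℝ) • c g‖ := by
        have := norm_sub_le (c (g ^ t)) (c (g ^ t) - (t : ℝ) • c g)
        simpa using this
    _ ≤ ‖c (g ^ t)‖ + t * (Δ + β) + Δ := by linarith

end QC

section Col

variable {A : Type*} [Ring A] {m : ℕ}

/-- The strictly-upper column part of `colMat`. -/
def colAux (m : ℕ) (A : Type*) [Ring A] (v : Fin m → A) : MatA (m + 1) A :=
  Matrix.of fun i j => if h : (i : ℕ) < m ∧ (j : ℕ) = m then v ⟨i, h.1⟩ else 0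

lemma colMat_eq (v : Fin m → A) : colMat m A v = 1 + colAux m A v := by
  ext p q
  simp only [colMat, colAux, Matrix.of_apply, Matrix.add_apply, Matrix.one_apply]

lemma colAux_add (v w : Fin m → A) :
    colAux m A v + colAux m A w = colAux m A (v + w) := by
  ext p q
  simp only [colAux, Matrix.of_apply, Matrix.add_apply]
  split_ifs <;> simp

lemma colAux_mul_colAux (v w : Fin m → A) :
    colAux m A v * colAux m A w = 0 := by
  ext p q
  rw [Matrix.mul_apply]
  refine Finset.sum_eq_zero fun r _ => ?_
  simp only [colAux, Matrix.of_apply, Matrix.zero_apply]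
  by_cases h : (p : ℕ) < m ∧ (r : ℕ) = m
  · rw [dif_pos h]
    have : ¬((r : ℕ) < m ∧ (q : ℕ) = m) := by omega
    rw [dif_neg this, mul_zero]
  · rw [dif_neg h, zero_mul]

lemma colMat_mul (v w : Fin m → A) :
    colMat m A v * colMat m A w = colMat m A (v + w) := by
  rw [colMat_eq, colMat_eq, colMat_eq, one_add_mul_one_add, colAux_mul_colAux, add_zero,
    add_assoc, colAux_add]

lemma colMat_zero : colMat m A (0 : Fin m → A) = 1 := by
  rw [colMat_eq]
  convert add_zero (1 : MatA (m + 1) A) using 2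
  ext p q
  simp only [colAux, Matrix.of_apply, Matrix.zero_apply]
  split_ifs <;> simp

lemma colAux_single (j₀ : Fin m) (x : A) :
    colAux m A (Pi.single j₀ x) = Matrix.single (Fin.castSucc j₀) (Fin.last m) x := by
  ext p q
  simp only [colAux, Matrix.of_apply, Matrix.single, Matrix.of_apply]
  by_cases h : (p : ℕ) < m ∧ (q : ℕ) = m
  · rw [dif_pos h]
    have hq : Fin.last m = q := by
      apply Fin.ext; simpa using h.2.symm
    by_cases hp : (⟨(p : ℕ), h.1⟩ : Fin m) = j₀
    · have : Fin.castSucc j₀ = p := by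
        apply Fin.ext; simp [← hp]
      rw [if_pos ⟨this, hq⟩, ← hp]
      simp
    · have hne : ¬(Fin.castSucc j₀ = p ∧ Fin.last m = q) := by
        rintro ⟨h1, -⟩
        apply hp
        apply Fin.ext
        have h2 := congrArg Fin.val h1
        simpa using h2.symm
      rw [if_neg hne, Pi.single_eq_of_ne hp]
  · have : ¬(Fin.castSucc j₀ = p ∧ Fin.last m = q) := by
      rintro ⟨h1, h2⟩
      apply h
      constructor
      · rw [← h1]; simpa using j₀.isLt
      · rw [← h2]; simp
    rw [dif_neg h, if_neg this]

lemma colMat_single (j₀ : Fin m) (x : A) :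
    colMat m A (Pi.single j₀ x) = elemMat (m + 1) A (Fin.castSucc j₀) (Fin.last m) x := by
  rw [colMat_eq, colAux_single, elemMat]

lemma castSucc_ne_last (j₀ : Fin m) : Fin.castSucc j₀ ≠ Fin.last m := by
  intro h
  have := j₀.isLt
  have h2 : ((Fin.castSucc j₀ : Fin (m+1)) : ℕ) = m := by rw [h]; simp
  simp at h2
  omega

/-- The column matrix as a unit. -/
def colUnit (v : Fin m → A) : (MatA (m + 1) A)ˣ where
  val := colMat m A v
  inv := colMat m A (-v)
  val_inv := by rw [colMat_mul, add_neg_cancel, colMat_zero]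
  inv_val := by rw [colMat_mul, neg_add_cancel, colMat_zero]

@[simp] lemma colUnit_val (v : Fin m → A) : (colUnit v).val = colMat m A v := rfl

lemma colUnit_mul (v w : Fin m → A) : colUnit v * colUnit w = colUnit (v + w) :=
  Units.ext (colMat_mul v w)

lemma colUnit_single (j₀ : Fin m) (x : A) :
    colUnit (Pi.single j₀ x)
      = elemUnit A (Fin.castSucc j₀) (Fin.last m) (castSucc_ne_last j₀) x :=
  Units.ext (colMat_single j₀ x)

lemma colUnit_zero : colUnit (0 : Fin m → A) = 1 := Units.ext colMat_zero

lemma colUnit_mem (v : Fin m → A) : colUnit v ∈ upperGrp m A := by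
  classical
  have key : ∀ (s : Finset (Fin m)) (v : Fin m → A), (∀ j ∉ s, v j = 0) →
      colUnit v ∈ upperGrp m A := by
    intro s
    induction s using Finset.induction_on with
    | empty =>
        intro v hv
        have : v = 0 := funext fun j => hv j (Finset.notMem_empty j)
        rw [this, colUnit_zero]
        exact one_mem _
    | @insert j₀ s' hj₀ ih =>
        intro v hv
        have hdec : v = Pi.single j₀ (v j₀) + Function.update v j₀ 0 := by
          funext j
          by_cases h : j = j₀
          · subst h; simp
          · simp [Pi.single_eq_of_ne h, Function.update_of_ne h]
        have h1 : colUnit v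
            = colUnit (Pi.single j₀ (v j₀)) * colUnit (Function.update v j₀ 0) := by
          rw [colUnit_mul, ← hdec]
        rw [h1]
        refine mul_mem ?_ (ih _ fun j hj => ?_)
        · rw [colUnit_single]
          exact Subgroup.subset_closure
            ⟨Fin.castSucc j₀, Fin.last m, v j₀, castSucc_ne_last j₀, by simp, rfl⟩
        · by_cases h : j = j₀
          · subst h; simp
          · rw [Function.update_of_ne h]
            exact hv j (by simp [h, hj])
  exact key Finset.univ v (fun j hj => absurd (Finset.mem_univ j) hj)

lemma elemUnit_mem {i j : Fin (m+1)} (hij : i ≠ j) (hi : (i : ℕ) < m) (a : A) :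
    elemUnit A i j hij a ∈ upperGrp m A :=
  Subgroup.subset_closure ⟨i, j, a, hij, hi, rfl⟩

/-- Elements of `upperGrp m A` have last row `(0,...,0,1)`. -/
lemma upperGrp_lastRow {u : (MatA (m+1) A)ˣ} (hu : u ∈ upperGrp m A) (q : Fin (m+1)) :
    u.val (Fin.last m) q = (1 : MatA (m+1) A) (Fin.last m) q := by
  classical
  have hmul : ∀ (x y : (MatA (m+1) A)ˣ),
      (∀ q, x.val (Fin.last m) q = (1 : MatA (m+1) A) (Fin.last m) q) →
      (∀ q, y.val (Fin.last m) q = (1 : MatA (m+1) A) (Fin.last m) q) →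
      (∀ q, (x * y).val (Fin.last m) q = (1 : MatA (m+1) A) (Fin.last m) q) := by
    intro x y hx hy q
    have hxy : (x * y).val = x.val * y.val := rfl
    rw [hxy, Matrix.mul_apply, Finset.sum_eq_single (Fin.last m)]
    · rw [hx, Matrix.one_apply_eq, one_mul]
      exact hy q
    · intro r _ hr
      rw [hx, Matrix.one_apply_ne (Ne.symm hr), zero_mul]
    · intro h
      exact absurd (Finset.mem_univ _) h
  have key := Subgroup.closure_induction
    (p := fun (x : (MatA (m+1) A)ˣ) (_ : x ∈ upperGrp m A) =>
      (∀ q, x.val (Fin.last m) q = (1 : MatA (m+1) A) (Fin.last m) q) ∧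
      (∀ q, (x⁻¹).val (Fin.last m) q = (1 : MatA (m+1) A) (Fin.last m) q))
    (fun x hxmem => by
      obtain ⟨i, j, a, hij, hi, hx⟩ := hxmem
      have hinv : (x⁻¹).val = elemMat (m+1) A i j (-a) := by
        have hxu : x = elemUnit A i j hij a := Units.ext hx
        rw [hxu, elemUnit_inv]
        rfl
      have hlast : i ≠ Fin.last m := by
        intro h
        rw [h] at hi
        simp at hi
      constructor
      · intro q
        rw [hx]
        simp only [elemMat, Matrix.add_apply, Matrix.single, Matrix.of_apply]
        rw [if_neg (fun hc => hlast hc.1), add_zero]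
      · intro q
        rw [hinv]
        simp only [elemMat, Matrix.add_apply, Matrix.single, Matrix.of_apply]
        rw [if_neg (fun hc => hlast hc.1), add_zero])
    (by
      refine ⟨fun q => ?_, fun q => ?_⟩ <;> simp)
    (fun x y _ _ hx hy => by
      refine ⟨hmul x y hx.1 hy.1, fun q => ?_⟩
      rw [_root_.mul_inv_rev]
      exact hmul y⁻¹ x⁻¹ hy.2 hx.2 q)
    (fun x _ hx => by
      refine ⟨hx.2, fun q => ?_⟩
      rw [inv_inv]
      exact hx.1 q)
    hu
  exact key.1 q

end Col

section Embed

variable {A : Type*} [Ring A] {m : ℕ}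

/-- Partial inverse of `Fin.succAbove k`. -/
def unemb (k : Fin (m + 2)) (p : Fin (m + 2)) : Fin (m + 1) :=
  if h : p = k then 0 else (Fin.exists_succAbove_eq h).choose

lemma emb_unemb {k p : Fin (m + 2)} (hp : p ≠ k) : k.succAbove (unemb k p) = p := by
  rw [unemb, dif_neg hp]
  exact (Fin.exists_succAbove_eq hp).choose_spec

lemma unemb_emb (k : Fin (m + 2)) (i : Fin (m + 1)) : unemb k (k.succAbove i) = i :=
  Fin.succAbove_right_injective (by rw [emb_unemb (Fin.succAbove_ne k i)])

lemma emb_lt {k : Fin (m + 2)} {i : Fin (m + 1)} (hi : (i : ℕ) < m) :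
    ((k.succAbove i : Fin (m + 2)) : ℕ) < m + 1 := by
  rcases lt_or_ge (Fin.castSucc i) k with h | h
  · rw [Fin.succAbove_of_castSucc_lt _ _ h]
    simpa using Nat.lt_succ_of_lt hi
  · rw [Fin.succAbove_of_le_castSucc _ _ h]
    simpa using hi

lemma emb_last {k : Fin (m + 2)} (hk : (k : ℕ) < m + 1) :
    k.succAbove (Fin.last m) = Fin.last (m + 1) := by
  rw [Fin.succAbove_of_le_castSucc _ _ (by
    rw [Fin.le_def]
    simpa using Nat.lt_succ_iff.mp hk)]
  exact Fin.succ_last m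

/-- Extension of an `(m+1)×(m+1)` matrix to an `(m+2)×(m+2)` matrix, inserting a
diagonal `1` at index `k`. -/
def extFun (k : Fin (m + 2)) (M : MatA (m + 1) A) : MatA (m + 2) A :=
  Matrix.of fun p q =>
    if p = k then (if q = k then 1 else 0)
    else if q = k then 0 else M (unemb k p) (unemb k q)

lemma extFun_one (k : Fin (m + 2)) : extFun k (1 : MatA (m + 1) A) = 1 := by
  ext p q
  simp only [extFun, Matrix.of_apply, Matrix.one_apply]
  by_cases hp : p = k
  · rw [if_pos hp]
    by_cases hq : q = k
    · rw [if_pos hq, if_pos (hp.trans hq.symm)]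
    · rw [if_neg hq, if_neg (fun h : p = q => hq (h.symm.trans hp))]
  · rw [if_neg hp]
    by_cases hq : q = k
    · rw [if_pos hq, if_neg (fun h : p = q => hp (h.trans hq))]
    · rw [if_neg hq]
      by_cases hpq : p = q
      · rw [if_pos (congrArg (unemb k) hpq), if_pos hpq]
      · rw [if_neg (fun h => hpq (by rw [← emb_unemb hp, ← emb_unemb hq, h])), if_neg hpq]

lemma extFun_mul (k : Fin (m + 2)) (M N : MatA (m + 1) A) :
    extFun k (M * N) = extFun k M * extFun k N := by
  ext p q
  rw [Matrix.mul_apply, Fin.sum_univ_succAbove _ k]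
  by_cases hp : p = k <;> by_cases hq : q = k <;>
    simp [extFun, hp, hq, Fin.succAbove_ne, unemb_emb, Matrix.mul_apply]

/-- `extFun` as a multiplicative monoid homomorphism. -/
def extHom (A : Type*) [Ring A] {m : ℕ} (k : Fin (m + 2)) : MatA (m + 1) A →* MatA (m + 2) A where
  toFun := extFun k
  map_one' := extFun_one k
  map_mul' M N := extFun_mul k M N

lemma extFun_elemMat (k : Fin (m + 2)) (i j : Fin (m + 1)) (a : A) :
    extFun k (elemMat (m + 1) A i j a)
      = elemMat (m + 2) A (k.succAbove i) (k.succAbove j) a := by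
  ext p q
  simp only [extFun, elemMat, Matrix.of_apply, Matrix.add_apply, Matrix.one_apply,
    Matrix.single, Matrix.of_apply]
  by_cases hp : p = k
  · have h2 : ¬(k.succAbove i = p ∧ k.succAbove j = q) :=
      fun h => Fin.succAbove_ne k i (h.1.trans hp)
    rw [if_pos hp, if_neg h2, add_zero]
    by_cases hq : q = k
    · rw [if_pos hq, if_pos (hp.trans hq.symm)]
    · rw [if_neg hq, if_neg (fun h : p = q => hq (h.symm.trans hp))]
  · rw [if_neg hp]
    by_cases hq : q = k
    · have h2 : ¬(k.succAbove i = p ∧ k.succAbove j = q) :=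
        fun h => Fin.succAbove_ne k j (h.2.trans hq)
      rw [if_pos hq, if_neg h2, add_zero, if_neg (fun h : p = q => hp (h.trans hq))]
    · rw [if_neg hq]
      have hpq : (p = q) ↔ (unemb k p = unemb k q) := by
        constructor
        · intro h; rw [h]
        · intro h; rw [← emb_unemb hp, ← emb_unemb hq, h]
      have hij : (i = unemb k p ∧ j = unemb k q) ↔ (k.succAbove i = p ∧ k.succAbove j = q) := by
        constructor
        · rintro ⟨h1, h2⟩
          rw [h1, h2, emb_unemb hp, emb_unemb hq]
          exact ⟨rfl, rfl⟩
        · rintro ⟨h1, h2⟩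
          rw [← h1, ← h2, unemb_emb, unemb_emb]
          exact ⟨rfl, rfl⟩
      congr 1
      · by_cases h : p = q
        · rw [if_pos h, if_pos (hpq.mp h)]
        · rw [if_neg h, if_neg (fun hc => h (hpq.mpr hc))]
      · by_cases h : i = unemb k p ∧ j = unemb k q
        · rw [if_pos h, if_pos (hij.mp h)]
        · rw [if_neg h, if_neg (fun hc => h (hij.mpr hc))]

lemma extUnits_mem {k : Fin (m + 2)} (hk : (k : ℕ) < m + 1) {u : (MatA (m + 1) A)ˣ}
    (hu : u ∈ upperGrp m A) :
    Units.map (extHom A k) u ∈ upperGrp (m + 1) A := by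
  refine Subgroup.closure_induction
    (p := fun (x : (MatA (m + 1) A)ˣ) (_ : x ∈ upperGrp m A) =>
      Units.map (extHom A k) x ∈ upperGrp (m + 1) A) ?_ ?_ ?_ ?_ hu
  · rintro x ⟨i, j, a, hij, hi, hx⟩
    have hval : (Units.map (extHom A k) x).val
        = elemMat (m + 2) A (k.succAbove i) (k.succAbove j) a := by
      rw [Units.coe_map]
      show extFun k x.val = _
      rw [hx, extFun_elemMat]
    exact Subgroup.subset_closure
      ⟨k.succAbove i, k.succAbove j, a,
        fun h => hij (Fin.succAbove_right_injective h), emb_lt hi, hval⟩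
  · show Units.map (extHom A k) 1 ∈ upperGrp (m + 1) A
    rw [_root_.map_one]
    exact one_mem _
  · intro x y _ _ hx hy
    show Units.map (extHom A k) (x * y) ∈ upperGrp (m + 1) A
    rw [_root_.map_mul]
    exact mul_mem hx hy
  · intro x _ hx
    show Units.map (extHom A k) x⁻¹ ∈ upperGrp (m + 1) A
    rw [_root_.map_inv]
    exact inv_mem hx

/-- The group homomorphism `E(m,A)⋉Aᵐ → E(m+1,A)⋉A^{m+1}` induced by inserting a
diagonal `1` at index `k`. -/
def phiHom (A : Type*) [Ring A] {m : ℕ} (k : Fin (m + 2)) (hk : (k : ℕ) < m + 1) :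
    ↥(upperGrp m A) →* ↥(upperGrp (m + 1) A) where
  toFun u := ⟨Units.map (extHom A k) u.val, extUnits_mem hk u.2⟩
  map_one' := by
    apply Subtype.ext
    simp
  map_mul' u v := by
    apply Subtype.ext
    show Units.map (extHom A k) (u.val * v.val) = _
    rw [_root_.map_mul]
    rfl

lemma phiHom_val (k : Fin (m + 2)) (hk : (k : ℕ) < m + 1) (s : ↥(upperGrp m A)) :
    (phiHom A k hk s).val.val = extFun k s.val.val := by
  show (Units.map (extHom A k) s.val).val = _
  rw [Units.coe_map]
  rfl

section Cont

variable [TopologicalSpace A]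

lemma extFun_continuous (k : Fin (m + 2)) : Continuous (extFun (A := A) k) := by
  apply continuous_matrix
  intro p q
  simp only [extFun, Matrix.of_apply]
  split_ifs
  · exact continuous_const
  · exact continuous_const
  · exact continuous_const
  · exact (continuous_apply (unemb k q)).comp (continuous_apply (unemb k p))

lemma phiHom_continuous (k : Fin (m + 2)) (hk : (k : ℕ) < m + 1) :
    Continuous (phiHom A k hk) := by
  apply Continuous.subtype_mk
  apply Units.continuous_iff.2
  constructor
  · show Continuous fun u : ↥(upperGrp m A) => extFun k u.val.val
    exact (extFun_continuous k).comp (Units.continuous_val.comp continuous_subtype_val)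
  · show Continuous fun u : ↥(upperGrp m A) => extFun k (Units.val (u.val)⁻¹)
    exact (extFun_continuous k).comp (Units.continuous_coe_inv.comp continuous_subtype_val)

end Cont

end Embed

section Gel

variable {A : Type*} [Ring A] {m : ℕ}

lemma lt_ne_last {i : Fin (m + 1)} (hi : (i : ℕ) < m) : i ≠ Fin.last m := by
  intro h
  rw [h] at hi
  simp at hi

/-- Elementary matrix as an element of the subgroup `upperGrp m A`. -/
def gel (A : Type*) [Ring A] {m : ℕ} (i j : Fin (m + 1)) (hij : i ≠ j) (hi : (i : ℕ) < m)
    (a : A) : ↥(upperGrp m A) :=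
  ⟨elemUnit A i j hij a, elemUnit_mem hij hi a⟩

@[simp] lemma gel_val (i j : Fin (m + 1)) (hij : i ≠ j) (hi : (i : ℕ) < m) (a : A) :
    (gel A i j hij hi a).val = elemUnit A i j hij a := rfl

lemma gel_mul_same (i j : Fin (m + 1)) (hij : i ≠ j) (hi : (i : ℕ) < m) (a b : A) :
    gel A i j hij hi a * gel A i j hij hi b = gel A i j hij hi (a + b) :=
  Subtype.ext (elemUnit_mul_same i j hij a b)

lemma gel_inv (i j : Fin (m + 1)) (hij : i ≠ j) (hi : (i : ℕ) < m) (a : A) :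
    (gel A i j hij hi a)⁻¹ = gel A i j hij hi (-a) :=
  Subtype.ext (elemUnit_inv i j hij a)

lemma gel_comm (i j p r : Fin (m + 1)) (hij : i ≠ j) (hpr : p ≠ r)
    (hi : (i : ℕ) < m) (hp : (p : ℕ) < m) (hjp : j ≠ p) (hri : r ≠ i) (a b : A) :
    gel A i j hij hi a * gel A p r hpr hp b = gel A p r hpr hp b * gel A i j hij hi a :=
  Subtype.ext (elemUnit_comm i j p r hij hpr hjp hri a b)

lemma gel_steinberg (i j p : Fin (m + 1)) (hij : i ≠ j) (hjp : j ≠ p) (hip : i ≠ p)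
    (hi : (i : ℕ) < m) (hj : (j : ℕ) < m) (a b : A) :
    gel A i j hij hi a * gel A j p hjp hj b
      = gel A j p hjp hj b * gel A i j hij hi a * gel A i p hip hi (a * b) :=
  Subtype.ext (elemUnit_steinberg i j p hij hjp hip a b)

lemma gel_pow (i j : Fin (m + 1)) (hij : i ≠ j) (hi : (i : ℕ) < m) (a : A) (t : ℕ) :
    gel A i j hij hi a ^ t = gel A i j hij hi (t • a) := by
  induction t with
  | zero =>
      apply Subtype.ext
      show (1 : (MatA (m+1) A)ˣ) = _
      rw [zero_smul]
      exact (elemUnit_zero i j hij).symm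
  | succ s ih => rw [pow_succ, ih, gel_mul_same, succ_nsmul]

/-- The column element of the subgroup. -/
def colg (A : Type*) [Ring A] {m : ℕ} (v : Fin m → A) : ↥(upperGrp m A) :=
  ⟨colUnit v, colUnit_mem v⟩

lemma colg_single (j₀ : Fin m) (x : A) (h1 : Fin.castSucc j₀ ≠ Fin.last m)
    (h2 : ((Fin.castSucc j₀ : Fin (m+1)) : ℕ) < m) :
    colg A (Pi.single j₀ x) = gel A (Fin.castSucc j₀) (Fin.last m) h1 h2 x :=
  Subtype.ext (colUnit_single j₀ x)

lemma colg_mul (v w : Fin m → A) : colg A v * colg A w = colg A (v + w) :=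
  Subtype.ext (colUnit_mul v w)

end Gel

section SupQ

variable {A : Type*} [Ring A] [TopologicalSpace A] [IsTopologicalRing A] {m : ℕ}
variable {X : Type*} [NormedAddCommGroup X]

lemma gel_continuous (i j : Fin (m + 1)) (hij : i ≠ j) (hi : (i : ℕ) < m) :
    Continuous fun a : A => gel A i j hij hi a := by
  apply Continuous.subtype_mk
  apply Units.continuous_iff.2
  have hmat : ∀ b : A, Continuous fun a : A => elemMat (m+1) A i j (b * a) := by
    intro b
    apply continuous_matrix
    intro p q
    simp only [elemMat, Matrix.add_apply, Matrix.single, Matrix.of_apply]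
    by_cases h : i = p ∧ j = q
    · simp only [if_pos h]
      exact continuous_const.add (continuous_const.mul continuous_id)
    · simp only [if_neg h]
      exact continuous_const
  constructor
  · show Continuous fun a : A => elemMat (m+1) A i j a
    simpa using hmat 1
  · show Continuous fun a : A => elemMat (m+1) A i j (-a)
    have := hmat (-1)
    simpa [neg_mul] using this

/-- Uniform bound for the quasi-cocycle on elementary matrices with entries in the
compact set `Q`. -/
lemma exists_supQ {Q : Set A} (hQc : IsCompact Q) (c : ↥(upperGrp m A) → X)
    (hc : Continuous c) :
    ∃ L : ℝ, 0 ≤ L ∧ ∀ (i j : Fin (m + 1)) (hij : i ≠ j) (hi : (i : ℕ) < m) (q : A),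
      q ∈ Q → ‖c (gel A i j hij hi q)‖ ≤ L := by
  classical
  have hpair : ∀ p : Fin (m+1) × Fin (m+1), ∃ B : ℝ, 0 ≤ B ∧
      ∀ (hij : p.1 ≠ p.2) (hi : ((p.1 : Fin (m+1)) : ℕ) < m) (q : A), q ∈ Q →
        ‖c (gel A p.1 p.2 hij hi q)‖ ≤ B := by
    intro p
    by_cases h : p.1 ≠ p.2 ∧ ((p.1 : Fin (m+1)) : ℕ) < m
    · have hcont : Continuous fun a : A => ‖c (gel A p.1 p.2 h.1 h.2 a)‖ :=
        (hc.comp (gel_continuous p.1 p.2 h.1 h.2)).norm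
      have himg : IsCompact ((fun a : A => ‖c (gel A p.1 p.2 h.1 h.2 a)‖) '' Q) :=
        hQc.image hcont
      obtain ⟨B, hB⟩ := himg.bddAbove
      refine ⟨max B 0, le_max_right _ _, fun hij hi q hq => ?_⟩
      have := hB (Set.mem_image_of_mem _ hq)
      exact le_trans this (le_max_left _ _)
    · exact ⟨0, le_rfl, fun hij hi => absurd ⟨hij, hi⟩ h⟩
  choose B hB0 hB using hpair
  refine ⟨∑ p : Fin (m+1) × Fin (m+1), B p, Finset.sum_nonneg fun p _ => hB0 p,
    fun i j hij hi q hq => ?_⟩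
  refine le_trans (hB (i, j) hij hi q hq) ?_
  exact Finset.single_le_sum (fun p _ => hB0 p) (Finset.mem_univ (i, j))

end SupQ

end Stmt17Aux

/- Proposition 5.5 (`fromttoffpp`): if the pair `E(n,A) ⋉ Aⁿ > Aⁿ` has weak relative
property (T_X) (with respect to the compact elementary generating set coming from `Q`),
then the pair `E(n+1,A) ⋉ A^{n+1} > A^{n+1}` has relative property (FF_X): every
quasi-1-cocycle is bounded on `A^{n+1}`. -/
open Stmt17Aux in
theorem stmt17 (A : Type*) [Ring A] [TopologicalSpace A] [IsTopologicalRing A]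
    (Q : Set A) (hQcompact : IsCompact Q) (hQ1 : (1 : A) ∈ Q) (hQsym : Q = -Q)
    (hQgen : Subring.closure Q = ⊤)
    (X : Type*) [NormedAddCommGroup X] [NormedSpace ℝ X] [CompleteSpace X]
    (n : ℕ) (hn : 2 ≤ n)
    (hwT : ∀ (ρ : ↥(upperGrp n A) →* (X ≃ₗᵢ[ℝ] X)), (∀ x : X, Continuous fun g => ρ g x) →
      ∃ ε : ℝ, 0 < ε ∧ ∀ (ξ : X) (b : ℝ),
        (∀ s : ↥(upperGrp n A),
          (∃ (i j : Fin (n + 1)) (q : A), i ≠ j ∧ q ∈ Q ∧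
            s.val.val = elemMat (n + 1) A i j q) →
          ‖ρ s ξ - ξ‖ ≤ b) →
        ∀ h : ↥(upperGrp n A), h.val ∈ colSet n A →
          ε * ‖ρ h ξ - ξ‖ ≤ b) :
    ∀ (ρ : ↥(upperGrp (n + 1) A) →* (X ≃ₗᵢ[ℝ] X)), (∀ x : X, Continuous fun g => ρ g x) →
      ∀ c : ↥(upperGrp (n + 1) A) → X, Continuous c →
        (∃ Δ : ℝ, ∀ g h : ↥(upperGrp (n + 1) A), ‖c (g * h) - c g - ρ g (c h)‖ ≤ Δ) →
        ∃ M : ℝ, ∀ h : ↥(upperGrp (n + 1) A),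
          h.val ∈ colSet (n + 1) A → ‖c h‖ ≤ M := by
  classical
  intro ρ hρ c hc hqc
  obtain ⟨Δ, hΔ⟩ := hqc
  have hΔ0 : 0 ≤ Δ := qc_nonneg ρ c Δ hΔ
  obtain ⟨L, hL0, hL⟩ := exists_supQ hQcompact c hc
  have hQneg1 : (-1 : A) ∈ Q := by
    rw [hQsym, Set.mem_neg, neg_neg]
    exact hQ1
  -- Step A : transfer of the weak property (T) hypothesis along the embeddings `phiHom`:
  -- the vector `c (e_{k,last}(a))` is almost invariant under `ρ (e_{i,last}(b))` for `i ≠ k`.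
  have keyA : ∀ k i : Fin (n + 2), ∃ C : ℝ, 0 ≤ C ∧
      ∀ (hk : (k : ℕ) < n + 1) (hi : (i : ℕ) < n + 1) (hik : i ≠ k)
        (hil : i ≠ Fin.last (n + 1)) (hkl : k ≠ Fin.last (n + 1)) (a b : A),
        ‖ρ (gel A i (Fin.last (n + 1)) hil hi b)
            (c (gel A k (Fin.last (n + 1)) hkl hk a))
          - c (gel A k (Fin.last (n + 1)) hkl hk a)‖ ≤ C := by
    intro k i
    by_cases hcase : (k : ℕ) < n + 1 ∧ (i : ℕ) < n + 1 ∧ i ≠ k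
    · obtain ⟨hk, hi, hik⟩ := hcase
      have hcont : ∀ x : X, Continuous fun g => (ρ.comp (phiHom A k hk)) g x :=
        fun x => (hρ x).comp (phiHom_continuous k hk)
      obtain ⟨ε, hε, hkey⟩ := hwT (ρ.comp (phiHom A k hk)) hcont
      refine ⟨(2 * L + 2 * Δ) / ε, by positivity, ?_⟩
      intro hk' hi' hik' hil hkl a b
      set y := gel A k (Fin.last (n + 1)) hkl hk' a with hy
      have hprem : ∀ s : ↥(upperGrp n A),
          (∃ (i' j' : Fin (n + 1)) (q : A), i' ≠ j' ∧ q ∈ Q ∧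
            s.val.val = elemMat (n + 1) A i' j' q) →
          ‖(ρ.comp (phiHom A k hk)) s (c y) - c y‖ ≤ 2 * L + 2 * Δ := by
        rintro s ⟨i', j', q, hij', hq, hs⟩
        by_cases hi'lt : (i' : ℕ) < n
        · have hne : k.succAbove i' ≠ k.succAbove j' :=
            fun h => hij' (Fin.succAbove_right_injective h)
          have hlt : ((k.succAbove i' : Fin (n + 2)) : ℕ) < n + 1 := emb_lt hi'lt
          have hφs : phiHom A k hk s
              = gel A (k.succAbove i') (k.succAbove j') hne hlt q := by
            apply Subtype.ext
            apply Units.ext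
            show (phiHom A k hk s).val.val = _
            rw [phiHom_val, hs, extFun_elemMat]
            rfl
          have hcomm : gel A (k.succAbove i') (k.succAbove j') hne hlt q * y
              = y * gel A (k.succAbove i') (k.succAbove j') hne hlt q := by
            rw [hy]
            exact gel_comm (k.succAbove i') (k.succAbove j') k (Fin.last (n + 1))
              hne hkl hlt hk' (Fin.succAbove_ne k j') ((lt_ne_last hlt).symm) q a
          have hb := qc_comm_disp ρ c Δ hΔ hcomm
          have hcL := hL _ _ hne hlt q hq
          have hρs : (ρ.comp (phiHom A k hk)) s
              = ρ (gel A (k.succAbove i') (k.succAbove j') hne hlt q) := by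
            rw [MonoidHom.comp_apply, hφs]
          rw [hρs]
          linarith
        · -- here necessarily `q = 0`, so the generator is trivial
          have hi'n : i' = Fin.last n := by
            apply Fin.ext
            have h2 := i'.isLt
            rw [Fin.val_last]
            omega
          have h1 := upperGrp_lastRow s.2 j'
          rw [hs] at h1
          have hq0 : q = 0 := by
            simp only [elemMat, Matrix.add_apply, Matrix.single, Matrix.of_apply] at h1
            rw [if_pos ⟨hi'n, trivial⟩] at h1
            exact (add_eq_left).1 h1
          have hs1 : s = 1 := by
            apply Subtype.ext
            apply Units.ext
            show s.val.val = 1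
            rw [hs, hq0]
            simp [elemMat]
          rw [hs1, _root_.map_one]
          have hone : (1 : X ≃ₗᵢ[ℝ] X) (c y) = c y := rfl
          rw [hone]
          simp only [sub_self, norm_zero]
          linarith
      have hi0lt : ((unemb k i : Fin (n + 1)) : ℕ) < n := by
        by_contra hcon
        have h2 : unemb k i = Fin.last n := by
          apply Fin.ext
          have := (unemb k i).isLt
          rw [Fin.val_last]
          omega
        have h3 : k.succAbove (unemb k i) = i := emb_unemb hik'
        rw [h2, emb_last hk'] at h3
        rw [← h3] at hi'
        simp [Fin.val_last] at hi'
      have hmem' : (gel A (unemb k i) (Fin.last n)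
          (lt_ne_last hi0lt) hi0lt b).val ∈ colSet n A := by
        refine ⟨Pi.single ⟨((unemb k i : Fin (n + 1)) : ℕ), hi0lt⟩ b, ?_⟩
        show elemMat (n + 1) A _ _ b = _
        rw [colMat_single]
        have hcast : Fin.castSucc ⟨((unemb k i : Fin (n + 1)) : ℕ), hi0lt⟩
            = unemb k i := Fin.ext rfl
        rw [hcast]
      have happ := hkey (c y) (2 * L + 2 * Δ) hprem _ hmem'
      have hφs' : phiHom A k hk (gel A (unemb k i) (Fin.last n)
          (lt_ne_last hi0lt) hi0lt b) = gel A i (Fin.last (n + 1)) hil hi' b := by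
        apply Subtype.ext
        apply Units.ext
        show (phiHom A k hk _).val.val = _
        rw [phiHom_val]
        show extFun k (elemMat (n + 1) A _ _ b) = _
        rw [extFun_elemMat, emb_last hk, emb_unemb hik']
        rfl
      rw [MonoidHom.comp_apply, hφs'] at happ
      rw [le_div_iff₀ hε]
      linarith
    · exact ⟨0, le_rfl, fun hk hi hik => absurd ⟨hk, hi, hik⟩ hcase⟩
  choose CA hCA0 hCA using keyA
  -- a partner index
  have hpartner : ∀ k : Fin (n + 2), ∃ k' : Fin (n + 2), (k' : ℕ) < n + 1 ∧ k' ≠ k := by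
    intro k
    by_cases h0 : (k : ℕ) = 0
    · refine ⟨⟨1, by omega⟩, ?_, ?_⟩
      · show (1 : ℕ) < n + 1
        omega
      · intro h
        have h2 := congrArg Fin.val h
        simp only [Fin.val_mk] at h2
        omega
    · refine ⟨⟨0, by omega⟩, ?_, ?_⟩
      · show (0 : ℕ) < n + 1
        omega
      · intro h
        have h2 := congrArg Fin.val h
        simp only [Fin.val_mk] at h2
        omega
  choose pt hptlt hptne using hpartner
  -- Step B : same-index almost-invariance.
  have keyB : ∀ k : Fin (n + 2), ∃ C : ℝ, 0 ≤ C ∧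
      ∀ (hk : (k : ℕ) < n + 1) (hkl : k ≠ Fin.last (n + 1)) (a b : A),
        ‖ρ (gel A k (Fin.last (n + 1)) hkl hk b) (c (gel A k (Fin.last (n + 1)) hkl hk a))
          - c (gel A k (Fin.last (n + 1)) hkl hk a)‖ ≤ C := by
    intro k
    refine ⟨2 * CA k (pt k) + 4 * L + 4 * Δ, by have := hCA0 k (pt k); linarith, ?_⟩
    intro hk hkl a b
    have hk'lt := hptlt k
    have hk'l : pt k ≠ Fin.last (n + 1) := lt_ne_last hk'lt
    have hkk' : k ≠ pt k := Ne.symm (hptne k)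
    have hst := gel_steinberg k (pt k) (Fin.last (n + 1)) hkk' hk'l hkl hk hk'lt (1 : A) b
    rw [one_mul] at hst
    have hu : gel A k (Fin.last (n + 1)) hkl hk b
        = (gel A k (pt k) hkk' hk (1 : A))⁻¹
          * ((gel A (pt k) (Fin.last (n + 1)) hk'l hk'lt b)⁻¹
            * (gel A k (pt k) hkk' hk (1 : A)
              * gel A (pt k) (Fin.last (n + 1)) hk'l hk'lt b)) := by
      rw [hst]
      group
    have dW : ∀ b' : A, ‖ρ (gel A (pt k) (Fin.last (n + 1)) hk'l hk'lt b')
        (c (gel A k (Fin.last (n + 1)) hkl hk a))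
        - c (gel A k (Fin.last (n + 1)) hkl hk a)‖ ≤ CA k (pt k) :=
      fun b' => hCA k (pt k) hk hk'lt (hptne k) hk'l hkl a b'
    have hcommg : ∀ e : A, gel A k (pt k) hkk' hk e * gel A k (Fin.last (n + 1)) hkl hk a
        = gel A k (Fin.last (n + 1)) hkl hk a * gel A k (pt k) hkk' hk e :=
      fun e => gel_comm k (pt k) k (Fin.last (n + 1)) hkk' hkl hk hk
        (hptne k) (Ne.symm hkl) e a
    have dg : ‖ρ (gel A k (pt k) hkk' hk (1 : A))
        (c (gel A k (Fin.last (n + 1)) hkl hk a))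
        - c (gel A k (Fin.last (n + 1)) hkl hk a)‖ ≤ 2 * L + 2 * Δ := by
      have h2 := qc_comm_disp ρ c Δ hΔ (hcommg 1)
      have h3 := hL k (pt k) hkk' hk 1 hQ1
      linarith
    have dginv : ‖ρ ((gel A k (pt k) hkk' hk (1 : A))⁻¹)
        (c (gel A k (Fin.last (n + 1)) hkl hk a))
        - c (gel A k (Fin.last (n + 1)) hkl hk a)‖ ≤ 2 * L + 2 * Δ := by
      rw [gel_inv]
      have h2 := qc_comm_disp ρ c Δ hΔ (hcommg (-1))
      have h3 := hL k (pt k) hkk' hk (-1) hQneg1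
      linarith
    have dwinv : ‖ρ ((gel A (pt k) (Fin.last (n + 1)) hk'l hk'lt b)⁻¹)
        (c (gel A k (Fin.last (n + 1)) hkl hk a))
        - c (gel A k (Fin.last (n + 1)) hkl hk a)‖ ≤ CA k (pt k) := by
      rw [gel_inv]
      exact dW (-b)
    rw [hu]
    have t1 := disp_mul ρ ((gel A k (pt k) hkk' hk (1 : A))⁻¹)
      ((gel A (pt k) (Fin.last (n + 1)) hk'l hk'lt b)⁻¹
        * (gel A k (pt k) hkk' hk (1 : A) * gel A (pt k) (Fin.last (n + 1)) hk'l hk'lt b))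
      (c (gel A k (Fin.last (n + 1)) hkl hk a))
    have t2 := disp_mul ρ ((gel A (pt k) (Fin.last (n + 1)) hk'l hk'lt b)⁻¹)
      (gel A k (pt k) hkk' hk (1 : A) * gel A (pt k) (Fin.last (n + 1)) hk'l hk'lt b)
      (c (gel A k (Fin.last (n + 1)) hkl hk a))
    have t3 := disp_mul ρ (gel A k (pt k) hkk' hk (1 : A))
      (gel A (pt k) (Fin.last (n + 1)) hk'l hk'lt b)
      (c (gel A k (Fin.last (n + 1)) hkl hk a))
    have t4 := dW b
    linarith
  choose CB hCB0 hCB using keyB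
  -- Step D : dilation estimate.
  have keyD : ∀ (k k' : Fin (n + 2)) (hk : (k : ℕ) < n + 1) (hk' : (k' : ℕ) < n + 1)
      (hne : k' ≠ k) (hkl : k ≠ Fin.last (n + 1)) (hk'l : k' ≠ Fin.last (n + 1))
      (t : ℕ) (a : A),
      ‖c (gel A k' (Fin.last (n + 1)) hk'l hk' (t • a))‖
        ≤ 2 * ‖c (gel A k (Fin.last (n + 1)) hkl hk a)‖
          + 2 * (t * (L + Δ) + Δ) + 5 * Δ := by
    intro k k' hk hk' hne hkl hk'l t a
    have hsmul : (t • (1 : A)) * a = t • a := by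
      rw [nsmul_eq_mul, nsmul_eq_mul, mul_one]
    have hst := gel_steinberg k' k (Fin.last (n + 1)) hne hkl hk'l hk' hk (t • (1 : A)) a
    rw [hsmul] at hst
    have hz0 : gel A k (Fin.last (n + 1)) hkl hk a * gel A k' k hne hk' (t • (1 : A))
        * gel A k' (Fin.last (n + 1)) hk'l hk' (t • a)
        = gel A k (Fin.last (n + 1)) hkl hk a * gel A k' k hne hk' (t • (1 : A))
        * ((gel A k' k hne hk' (t • (1 : A)))⁻¹ * (gel A k (Fin.last (n + 1)) hkl hk a)⁻¹
          * gel A k' k hne hk' (t • (1 : A)) * gel A k (Fin.last (n + 1)) hkl hk a) := by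
      rw [← hst]
      group
    have hz : gel A k' (Fin.last (n + 1)) hk'l hk' (t • a)
        = (gel A k' k hne hk' (t • (1 : A)))⁻¹ * (gel A k (Fin.last (n + 1)) hkl hk a)⁻¹
          * gel A k' k hne hk' (t • (1 : A)) * gel A k (Fin.last (n + 1)) hkl hk a :=
      mul_left_cancel hz0
    rw [hz]
    have h4 := qc_four ρ c Δ hΔ ((gel A k' k hne hk' (t • (1 : A)))⁻¹)
      ((gel A k (Fin.last (n + 1)) hkl hk a)⁻¹)
      (gel A k' k hne hk' (t • (1 : A)))
      (gel A k (Fin.last (n + 1)) hkl hk a)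
    have hw1 : gel A k' k hne hk' (t • (1 : A)) = (gel A k' k hne hk' 1) ^ t :=
      (gel_pow k' k hne hk' 1 t).symm
    have hcw : ‖c (gel A k' k hne hk' (t • (1 : A)))‖ ≤ t * (L + Δ) + Δ := by
      rw [hw1]
      have h5 := qc_pow_norm ρ c Δ hΔ (gel A k' k hne hk' 1) t
      have h6 := hL k' k hne hk' 1 hQ1
      have h7 : (t : ℝ) * (‖c (gel A k' k hne hk' 1)‖ + Δ) ≤ t * (L + Δ) :=
        mul_le_mul_of_nonneg_left (by linarith) (Nat.cast_nonneg t)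
      linarith
    have hwinv : (gel A k' k hne hk' (t • (1 : A)))⁻¹ = (gel A k' k hne hk' (-1)) ^ t := by
      rw [gel_inv, gel_pow]
      congr 1
      exact (smul_neg t (1 : A)).symm
    have hcwinv : ‖c ((gel A k' k hne hk' (t • (1 : A)))⁻¹)‖ ≤ t * (L + Δ) + Δ := by
      rw [hwinv]
      have h5 := qc_pow_norm ρ c Δ hΔ (gel A k' k hne hk' (-1)) t
      have h6 := hL k' k hne hk' (-1) hQneg1
      have h7 : (t : ℝ) * (‖c (gel A k' k hne hk' (-1))‖ + Δ) ≤ t * (L + Δ) :=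
        mul_le_mul_of_nonneg_left (by linarith) (Nat.cast_nonneg t)
      linarith
    have hcyinv := qc_inv_norm ρ c Δ hΔ (gel A k (Fin.last (n + 1)) hkl hk a)
    linarith
  -- Step K : uniform bound on single column entries.
  have keyK : ∀ k : Fin (n + 2), ∃ K : ℝ, 0 ≤ K ∧
      ∀ (hk : (k : ℕ) < n + 1) (hkl : k ≠ Fin.last (n + 1)) (a : A),
        ‖c (gel A k (Fin.last (n + 1)) hkl hk a)‖ ≤ K := by
    intro k
    refine ⟨18 * (L + Δ) + 31 * Δ + 9 * CB k, by have := hCB0 k; linarith, ?_⟩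
    intro hk hkl a
    have hk'lt := hptlt k
    have hk'l : pt k ≠ Fin.last (n + 1) := lt_ne_last hk'lt
    have hinv : ∀ t : ℕ, ‖ρ ((gel A k (Fin.last (n + 1)) hkl hk a) ^ t)
        (c (gel A k (Fin.last (n + 1)) hkl hk a))
        - c (gel A k (Fin.last (n + 1)) hkl hk a)‖ ≤ CB k := by
      intro t
      rw [gel_pow]
      exact hCB k hk hkl a (t • a)
    have hlow := qc_pow_lower ρ c Δ hΔ (gel A k (Fin.last (n + 1)) hkl hk a) (CB k) hinv 9
    rw [gel_pow] at hlow
    have h9 : (9 : ℕ) • a = (3 : ℕ) • ((3 : ℕ) • a) := by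
      rw [smul_smul]
      norm_num
    rw [h9] at hlow
    have hd1 := keyD (pt k) k hk'lt hk (Ne.symm (hptne k)) hk'l hkl 3 ((3 : ℕ) • a)
    have hd2 := keyD k (pt k) hk hk'lt (hptne k) hkl hk'l 3 a
    have hnn := norm_nonneg (c (gel A k (Fin.last (n + 1)) hkl hk a))
    push_cast at hlow hd1 hd2
    linarith
  choose Kf hK0 hK using keyK
  -- assembling the bound on all column vectors
  have colbound : ∀ (s : Finset (Fin (n + 1))) (v : Fin (n + 1) → A), (∀ j ∉ s, v j = 0) →
      ‖c (colg A v)‖ ≤ (∑ j ∈ s, (Kf (Fin.castSucc j) + Δ)) + Δ := by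
    intro s
    induction s using Finset.induction_on with
    | empty =>
        intro v hv0
        have hv : v = 0 := funext fun j => hv0 j (Finset.notMem_empty j)
        rw [hv]
        have h1 : colg A (0 : Fin (n + 1) → A) = 1 := Subtype.ext colUnit_zero
        rw [h1, Finset.sum_empty]
        have h2 := qc_one ρ c Δ hΔ
        linarith
    | @insert j₀ s' hj₀ ih =>
        intro v hv0
        have hclt : ((Fin.castSucc j₀ : Fin (n + 2)) : ℕ) < n + 1 := by
          simpa using j₀.isLt
        have hcne : Fin.castSucc j₀ ≠ Fin.last (n + 1) := lt_ne_last hclt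
        have hsplit : colg A v
            = gel A (Fin.castSucc j₀) (Fin.last (n + 1)) hcne hclt (v j₀)
              * colg A (Function.update v j₀ 0) := by
          rw [← colg_single j₀ (v j₀) hcne hclt, colg_mul]
          congr 1
          funext j
          by_cases hj : j = j₀
          · subst hj
            simp
          · simp [Pi.single_eq_of_ne hj, Function.update_of_ne hj]
        rw [hsplit, Finset.sum_insert hj₀]
        have hq := qc_mul_norm ρ c Δ hΔ
          (gel A (Fin.castSucc j₀) (Fin.last (n + 1)) hcne hclt (v j₀))
          (colg A (Function.update v j₀ 0))
        have hKb := hK (Fin.castSucc j₀) hclt hcne (v j₀)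
        have hih := ih (Function.update v j₀ 0) (by
          intro j hj
          by_cases hjj : j = j₀
          · subst hjj
            simp
          · rw [Function.update_of_ne hjj]
            exact hv0 j (by simp [Finset.mem_insert, hjj, hj]))
        linarith
  refine ⟨(∑ j : Fin (n + 1), (Kf (Fin.castSucc j) + Δ)) + Δ, ?_⟩
  intro h hmem
  obtain ⟨v, hv⟩ := hmem
  have hh : h = colg A v := by
    apply Subtype.ext
    apply Units.ext
    exact hv
  rw [hh]
  exact colbound Finset.univ v (fun j hj => absurd (Finset.mem_univ j) hj)
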